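/- arXiv:1503.03390 — 5 statements merged into one kernel-verified Lean document; each statement's English description precedes it below -/
import Mathlib

section
/- For every even k ≥ 0, the number of walks of length k between two vertices at distance 2 in the cycle C₆ equals the Jacobsthal number J(k) = (2^k - 1)/3. -/
/-- The Jacobsthal numbers: J(0)=0, J(1)=1, J(k)=J(k-1)+2J(k-2). -/
def J : ℕ → ℕ
  | 0 => 0
  | 1 => 1
  | (k+2) => J (k+1) + 2 * J k

/-- The cycle graph on 6 vertices. -/
def C6 : SimpleGraph (ZMod 6) where
  Adj a b := b = a + 1 ∨ a = b + 1
  symm := ⟨fun a b h => Or.symm h⟩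
  loopless := ⟨by intro a h; rcases h with h | h <;> simp at h <;> exact absurd h (by decide)⟩

instance : DecidableRel C6.Adj := fun a b => inferInstanceAs (Decidable (b = a + 1 ∨ a = b + 1))

lemma sum_zmod6 (f : ZMod 6 → ℕ) : ∑ x : ZMod 6, f x = f 0 + f 1 + f 2 + f 3 + f 4 + f 5 := by
  exact Fin.sum_univ_six f

lemma J3 : ∀ k, (3:ℤ) * J k = 2^k - (-1)^k
  | 0 => by simp [J]
  | 1 => by simp [J]
  | (k+2) => by
      have h1 := J3 (k+1)
      have h2 := J3 k
      have hJ : (J (k+2) : ℤ) = J (k+1) + 2 * J k := by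
        show ((J (k+1) + 2 * J k : ℕ) : ℤ) = _
        push_cast; ring
      rw [show ((k:ℕ)+2) = k+1+1 from rfl, hJ]
      linear_combination h1 + 2 * h2

lemma Jrec (m : ℕ) : J (2*m+2) = 4 * J (2*m) + 1 := by
  have h1 := J3 (2*m)
  have h2 := J3 (2*m+2)
  have e1 : ((-1:ℤ))^(2*m) = 1 := by rw [pow_mul]; norm_num
  have e2 : ((-1:ℤ))^(2*m+2) = 1 := by rw [pow_add, pow_mul]; norm_num
  have e3 : (2:ℤ)^(2*m+2) = 4 * 2^(2*m) := by ring
  rw [e1] at h1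
  rw [e2, e3] at h2
  have : (J (2*m+2) : ℤ) = 4 * (J (2*m) : ℤ) + 1 := by linarith
  exact_mod_cast this

lemma key (m : ℕ) : ∀ u v : ZMod 6, ((C6.adjMatrix ℕ) ^ (2*m)) u v =
    if v = u then J (2*m) + 1 else if v = u + 2 ∨ v = u + 4 then J (2*m) else 0 := by
  induction m with
  | zero =>
    intro u v
    simp only [Nat.mul_zero, pow_zero, Matrix.one_apply, J]
    fin_cases u <;> fin_cases v <;> simp <;> decide
  | succ m ih =>
    intro u v
    have hrec : J (2*m+1+1) = 4 * J (2*m) + 1 := Jrec m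
    rw [show 2*(m+1) = 2*m+1+1 by ring, pow_succ, pow_succ, Matrix.mul_apply]
    have h : ∀ w, ((C6.adjMatrix ℕ) ^ (2*m) * C6.adjMatrix ℕ) u w
        = ∑ x : ZMod 6, ((C6.adjMatrix ℕ) ^ (2*m)) u x * (C6.adjMatrix ℕ) x w := by
      intro w; rw [Matrix.mul_apply]
    simp only [sum_zmod6, h, ih, SimpleGraph.adjMatrix_apply]
    have hcases : ∀ w : ZMod 6, w = 0 ∨ w = 1 ∨ w = 2 ∨ w = 3 ∨ w = 4 ∨ w = 5 := by decide
    rcases hcases u with rfl | rfl | rfl | rfl | rfl | rfl <;>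
      rcases hcases v with rfl | rfl | rfl | rfl | rfl | rfl <;>
      simp (config := { decide := true }) only [C6, if_true, if_false, mul_one, mul_zero,
        add_zero, zero_add, zero_mul, one_mul] <;>
      omega

lemma two_step (u v : ZMod 6) (hne : u ≠ v) (h : ∃ w, C6.Adj u w ∧ C6.Adj w v) :
    v = u + 2 ∨ v = u + 4 := by
  revert hne h
  revert u v
  decide

theorem card_walks_C6_dist_two (k : ℕ) (hk : Even k) (u v : ZMod 6) (huv : C6.dist u v = 2) :
    Fintype.card {p : C6.Walk u v // p.length = k} = J k ∧
    (J k : ℚ) = (2 ^ k - 1) / 3 := by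
  obtain ⟨m, hm⟩ := hk
  have hk2 : k = 2 * m := by omega
  subst hk2
  -- v = u + 2 ∨ v = u + 4
  have hne : u ≠ v := by
    intro h; subst h; rw [SimpleGraph.dist_self] at huv; omega
  obtain ⟨p, hp⟩ := SimpleGraph.exists_walk_of_dist_ne_zero (G := C6) (by omega : C6.dist u v ≠ 0)
  rw [huv] at hp
  have hoff : v = u + 2 ∨ v = u + 4 := by
    apply two_step u v hne
    cases p with
    | nil => simp at hp
    | cons h q =>
      cases q with
      | nil => simp at hp
      | cons h' q' =>
        have : q'.length = 0 := by simpa using hp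
        have := SimpleGraph.Walk.eq_of_length_eq_zero this
        subst this
        exact ⟨_, h, h'⟩
  constructor
  · have hcard := SimpleGraph.adjMatrix_pow_apply_eq_card_walk (α := ℕ) (G := C6) (2*m) u v
    rw [key m u v] at hcard
    rw [show Fintype.card {p : C6.Walk u v // p.length = 2*m}
        = Fintype.card {p : C6.Walk u v | p.length = 2*m} from
      Fintype.card_congr (Equiv.subtypeEquivRight (fun _ => Iff.rfl))]
    have hvu : ¬ (v = u) := fun h => hne h.symm
    rw [if_neg hvu, if_pos hoff] at hcard
    exact hcard.symm
  · have h3 := J3 (2*m)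
    have e1 : ((-1:ℤ))^(2*m) = 1 := by rw [pow_mul]; norm_num
    rw [e1] at h3
    have hq : (3:ℚ) * J (2*m) = 2^(2*m) - 1 := by exact_mod_cast h3
    field_simp
    linarith
end

section
/- Let γ be a proper 3-edge-colouring of GP(3k,k) with colours {1,2,3}. Then for every i ∈ ℤ_{3k}, the three outer edges u_i u_{i+1}, u_{i+k} u_{i+k+1}, u_{i+2k} u_{i+2k+1} are not all the same colour. -/
/-- The generalised Petersen graph `GP(n,k)`: the vertex `Sum.inl i` is the outer vertex
`u_i`, the vertex `Sum.inr i` is the inner vertex `v_i`, and the edges are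
`u_i u_{i+1}`, `u_i v_i` and `v_i v_{i+k}` for `i ∈ ℤ_n`. -/
def GP (n k : ℕ) : SimpleGraph (ZMod n ⊕ ZMod n) :=
  SimpleGraph.fromRel (fun a b =>
    match a, b with
    | Sum.inl i, Sum.inl j => j = i + 1
    | Sum.inl i, Sum.inr j => j = i
    | Sum.inr i, Sum.inr j => j = i + (k : ZMod n)
    | _, _ => False)

/-- A 1-factorisation of `G`: a set of perfect matchings of `G` partitioning its edge set. -/
def IsOneFactorisation {V : Type*} (G : SimpleGraph V) (P : Set G.Subgraph) : Prop :=
  (∀ M ∈ P, M.IsPerfectMatching) ∧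
  P.PairwiseDisjoint (fun M => M.edgeSet) ∧
  (⋃ M ∈ P, M.edgeSet) = G.edgeSet

/-- A proper edge colouring of `G`: any two distinct edges of `G` sharing a vertex
receive different colours. -/
def IsProperEdgeColoring {V α : Type*} (G : SimpleGraph V) (γ : Sym2 V → α) : Prop :=
  ∀ e f, e ∈ G.edgeSet → f ∈ G.edgeSet → e ≠ f → (∃ v, v ∈ e ∧ v ∈ f) → γ e ≠ γ f

lemma fin3_eq (a b c d : Fin 3) (h1 : a ≠ b) (h2 : a ≠ c) (h3 : b ≠ c) (h4 : d ≠ a)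
    (h5 : d ≠ c) : d = b := by
  fin_cases a <;> fin_cases b <;> fin_cases c <;> fin_cases d <;> simp_all

lemma fin3_all (a b c d : Fin 3) (h1 : a ≠ b) (h2 : a ≠ c) (h3 : b ≠ c) (h4 : d ≠ a)
    (h5 : d ≠ b) (h6 : d ≠ c) : False := by
  fin_cases a <;> fin_cases b <;> fin_cases c <;> fin_cases d <;> simp_all

theorem outer_triple_not_monochromatic (k : ℕ) (hk : 1 ≤ k)
    (γ : Sym2 (ZMod (3*k) ⊕ ZMod (3*k)) → Fin 3)
    (hγ : IsProperEdgeColoring (GP (3*k) k) γ) (i : ZMod (3*k)) :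
    ¬ (γ s(Sum.inl i, Sum.inl (i + 1)) =
         γ s(Sum.inl (i + (k : ZMod (3*k))), Sum.inl (i + (k : ZMod (3*k)) + 1)) ∧
       γ s(Sum.inl i, Sum.inl (i + 1)) =
         γ s(Sum.inl (i + 2*(k : ZMod (3*k))), Sum.inl (i + 2*(k : ZMod (3*k)) + 1))) := by
  haveI : NeZero (3*k) := ⟨by omega⟩
  haveI : Fact (1 < 3*k) := ⟨by omega⟩
  set K : ZMod (3*k) := (k : ZMod (3*k)) with hKdef
  set P : ZMod (3*k) := i + K with hPdef
  set Q : ZMod (3*k) := i + 2*K with hQdef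
  have h1 : (1 : ZMod (3*k)) ≠ 0 := one_ne_zero
  have hK : K ≠ 0 := by
    intro h
    have h2 := (ZMod.natCast_eq_zero_iff k (3*k)).mp h
    have := Nat.le_of_dvd (by omega) h2
    omega
  have h2K : 2*K ≠ 0 := by
    intro h
    have h' : ((2*k : ℕ) : ZMod (3*k)) = 0 := by push_cast; exact h
    have h2 := (ZMod.natCast_eq_zero_iff (2*k) (3*k)).mp h'
    have := Nat.le_of_dvd (by omega) h2
    omega
  have h3K : 3*K = 0 := by
    have : ((3*k : ℕ) : ZMod (3*k)) = 0 := ZMod.natCast_self _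
    push_cast at this
    linear_combination this
  -- vertex distinctness
  have hiP : i ≠ P := by intro h; exact hK (by linear_combination -h)
  have hiQ : i ≠ Q := by intro h; exact h2K (by linear_combination -h)
  have hPQ : P ≠ Q := by intro h; exact hK (by linear_combination -h)
  have hQP : Q = P + K := by rw [hPdef, hQdef]; ring
  have hiQK : i = Q + K := by rw [hQdef]; linear_combination -h3K
  -- edges
  have adjO : ∀ j : ZMod (3*k), s(Sum.inl j, Sum.inl (j+1)) ∈ (GP (3*k) k).edgeSet := by
    intro j
    refine ⟨?_, Or.inl rfl⟩
    simp only [ne_eq, Sum.inl.injEq]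
    intro h; exact h1 (by linear_combination -h)
  have adjS : ∀ j : ZMod (3*k), s(Sum.inl j, Sum.inr j) ∈ (GP (3*k) k).edgeSet := by
    intro j; exact ⟨by simp, Or.inl rfl⟩
  have he1 : s(Sum.inr i, Sum.inr P) ∈ (GP (3*k) k).edgeSet :=
    ⟨by simpa using hiP, Or.inl hPdef⟩
  have he2 : s(Sum.inr P, Sum.inr Q) ∈ (GP (3*k) k).edgeSet :=
    ⟨by simpa using hPQ, Or.inl hQP⟩
  have he3 : s(Sum.inr Q, Sum.inr i) ∈ (GP (3*k) k).edgeSet :=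
    ⟨by simpa using (Ne.symm hiQ), Or.inl hiQK⟩
  -- triangle colours pairwise distinct
  have ht12 : γ s(Sum.inr i, Sum.inr P) ≠ γ s(Sum.inr P, Sum.inr Q) := by
    refine hγ _ _ he1 he2 ?_ ⟨Sum.inr P, by simp, by simp⟩
    simp only [ne_eq, Sym2.eq_iff, Sum.inr.injEq, not_or]
    refine ⟨fun h => ?_, fun h => ?_⟩ <;> first
      | exact hiP h.1 | exact hiQ h.1 | exact hPQ h.1
      | exact hiP.symm h.1 | exact hiQ.symm h.1 | exact hPQ.symm h.1
      | exact hiP h.2 | exact hiQ h.2 | exact hPQ h.2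
      | exact hiP.symm h.2 | exact hiQ.symm h.2 | exact hPQ.symm h.2
  have ht23 : γ s(Sum.inr P, Sum.inr Q) ≠ γ s(Sum.inr Q, Sum.inr i) := by
    refine hγ _ _ he2 he3 ?_ ⟨Sum.inr Q, by simp, by simp⟩
    simp only [ne_eq, Sym2.eq_iff, Sum.inr.injEq, not_or]
    refine ⟨fun h => ?_, fun h => ?_⟩ <;> first
      | exact hiP h.1 | exact hiQ h.1 | exact hPQ h.1
      | exact hiP.symm h.1 | exact hiQ.symm h.1 | exact hPQ.symm h.1
      | exact hiP h.2 | exact hiQ h.2 | exact hPQ h.2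
      | exact hiP.symm h.2 | exact hiQ.symm h.2 | exact hPQ.symm h.2
  have ht13 : γ s(Sum.inr i, Sum.inr P) ≠ γ s(Sum.inr Q, Sum.inr i) := by
    refine hγ _ _ he1 he3 ?_ ⟨Sum.inr i, by simp, by simp⟩
    simp only [ne_eq, Sym2.eq_iff, Sum.inr.injEq, not_or]
    refine ⟨fun h => ?_, fun h => ?_⟩ <;> first
      | exact hiP h.1 | exact hiQ h.1 | exact hPQ h.1
      | exact hiP.symm h.1 | exact hiQ.symm h.1 | exact hPQ.symm h.1
      | exact hiP h.2 | exact hiQ h.2 | exact hPQ h.2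
      | exact hiP.symm h.2 | exact hiQ.symm h.2 | exact hPQ.symm h.2
  -- spokes vs triangle edges
  have hsi1 : γ s(Sum.inl i, Sum.inr i) ≠ γ s(Sum.inr i, Sum.inr P) := by
    refine hγ _ _ (adjS i) he1 ?_ ⟨Sum.inr i, by simp, by simp⟩
    simp only [ne_eq, Sym2.eq_iff, Sum.inl.injEq, Sum.inr.injEq, reduceCtorEq,
      false_and, and_false, not_or, or_self, not_false_eq_true, or_false, false_or] <;> tauto
  have hsi3 : γ s(Sum.inl i, Sum.inr i) ≠ γ s(Sum.inr Q, Sum.inr i) := by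
    refine hγ _ _ (adjS i) he3 ?_ ⟨Sum.inr i, by simp, by simp⟩
    simp only [ne_eq, Sym2.eq_iff, Sum.inl.injEq, Sum.inr.injEq, reduceCtorEq,
      false_and, and_false, not_or, or_self, not_false_eq_true, or_false, false_or] <;> tauto
  have hsP1 : γ s(Sum.inl P, Sum.inr P) ≠ γ s(Sum.inr i, Sum.inr P) := by
    refine hγ _ _ (adjS P) he1 ?_ ⟨Sum.inr P, by simp, by simp⟩
    simp only [ne_eq, Sym2.eq_iff, Sum.inl.injEq, Sum.inr.injEq, reduceCtorEq,
      false_and, and_false, not_or, or_self, not_false_eq_true, or_false, false_or] <;> tauto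
  have hsP2 : γ s(Sum.inl P, Sum.inr P) ≠ γ s(Sum.inr P, Sum.inr Q) := by
    refine hγ _ _ (adjS P) he2 ?_ ⟨Sum.inr P, by simp, by simp⟩
    simp only [ne_eq, Sym2.eq_iff, Sum.inl.injEq, Sum.inr.injEq, reduceCtorEq,
      false_and, and_false, not_or, or_self, not_false_eq_true, or_false, false_or] <;> tauto
  have hsQ2 : γ s(Sum.inl Q, Sum.inr Q) ≠ γ s(Sum.inr P, Sum.inr Q) := by
    refine hγ _ _ (adjS Q) he2 ?_ ⟨Sum.inr Q, by simp, by simp⟩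
    simp only [ne_eq, Sym2.eq_iff, Sum.inl.injEq, Sum.inr.injEq, reduceCtorEq,
      false_and, and_false, not_or, or_self, not_false_eq_true, or_false, false_or] <;> tauto
  have hsQ3 : γ s(Sum.inl Q, Sum.inr Q) ≠ γ s(Sum.inr Q, Sum.inr i) := by
    refine hγ _ _ (adjS Q) he3 ?_ ⟨Sum.inr Q, by simp, by simp⟩
    simp only [ne_eq, Sym2.eq_iff, Sum.inl.injEq, Sum.inr.injEq, reduceCtorEq,
      false_and, and_false, not_or, or_self, not_false_eq_true, or_false, false_or] <;> tauto
  -- spokes equal opposite triangle edge colours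
  have hsi : γ s(Sum.inl i, Sum.inr i) = γ s(Sum.inr P, Sum.inr Q) :=
    fin3_eq _ _ _ _ ht12 ht13 ht23 hsi1 hsi3
  have hsP : γ s(Sum.inl P, Sum.inr P) = γ s(Sum.inr Q, Sum.inr i) :=
    fin3_eq _ _ _ _ ht13 ht12 (Ne.symm ht23) hsP1 hsP2
  have hsQ : γ s(Sum.inl Q, Sum.inr Q) = γ s(Sum.inr i, Sum.inr P) :=
    fin3_eq _ _ _ _ (Ne.symm ht12) ht23 ht13 hsQ2 hsQ3
  -- now the outer edges
  rintro ⟨hA, hB⟩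
  have hci : γ s(Sum.inl i, Sum.inl (i+1)) ≠ γ s(Sum.inl i, Sum.inr i) := by
    refine hγ _ _ (adjO i) (adjS i) ?_ ⟨Sum.inl i, by simp, by simp⟩
    simp only [ne_eq, Sym2.eq_iff, Sum.inl.injEq, Sum.inr.injEq, reduceCtorEq,
      false_and, and_false, not_or, or_self, not_false_eq_true, or_false, false_or] <;> tauto
  have hcP : γ s(Sum.inl P, Sum.inl (P+1)) ≠ γ s(Sum.inl P, Sum.inr P) := by
    refine hγ _ _ (adjO P) (adjS P) ?_ ⟨Sum.inl P, by simp, by simp⟩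
    simp only [ne_eq, Sym2.eq_iff, Sum.inl.injEq, Sum.inr.injEq, reduceCtorEq,
      false_and, and_false, not_or, or_self, not_false_eq_true, or_false, false_or] <;> tauto
  have hcQ : γ s(Sum.inl Q, Sum.inl (Q+1)) ≠ γ s(Sum.inl Q, Sum.inr Q) := by
    refine hγ _ _ (adjO Q) (adjS Q) ?_ ⟨Sum.inl Q, by simp, by simp⟩
    simp only [ne_eq, Sym2.eq_iff, Sum.inl.injEq, Sum.inr.injEq, reduceCtorEq,
      false_and, and_false, not_or, or_self, not_false_eq_true, or_false, false_or] <;> tauto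
  rw [← hA] at hcP
  rw [← hB] at hcQ
  rw [hsi] at hci
  rw [hsP] at hcP
  rw [hsQ] at hcQ
  exact fin3_all _ _ _ _ ht12 ht13 ht23 hcQ hci hcP
end

section
/- If a proper 3-edge-colouring of the outer cycle of GP(3k,k) extends to a proper 3-edge-colouring of all of GP(3k,k), then this extension is unique. -/
lemma fin3_unique : ∀ a b c d : Fin 3, a ≠ b → c ≠ a → c ≠ b → d ≠ a → d ≠ b → c = d := by
  decide

/-- A proper 3-edge-colouring of `GP(3k,k)` is uniquely determined by its restriction to
the outer cycle: two proper colourings agreeing on all outer edges agree on all edges. -/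
theorem extension_of_outer_colouring_unique (k : ℕ) (hk : 1 ≤ k)
    (γ₁ γ₂ : Sym2 (ZMod (3*k) ⊕ ZMod (3*k)) → Fin 3)
    (h₁ : IsProperEdgeColoring (GP (3*k) k) γ₁)
    (h₂ : IsProperEdgeColoring (GP (3*k) k) γ₂)
    (houter : ∀ i : ZMod (3*k),
      γ₁ s(Sum.inl i, Sum.inl (i + 1)) = γ₂ s(Sum.inl i, Sum.inl (i + 1))) :
    ∀ e ∈ (GP (3*k) k).edgeSet, γ₁ e = γ₂ e := by
  haveI : NeZero (3*k) := ⟨by omega⟩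
  haveI : Fact (1 < 3*k) := ⟨by omega⟩
  -- basic nonvanishing facts in ZMod (3k)
  have hK : ((k:ℕ) : ZMod (3*k)) ≠ 0 := by
    intro hd
    rw [ZMod.natCast_eq_zero_iff] at hd
    have := Nat.le_of_dvd (by omega) hd; omega
  have hK2 : ((k:ℕ) : ZMod (3*k)) + k ≠ 0 := by
    intro hd
    rw [show ((k:ℕ):ZMod (3*k)) + k = ((2*k:ℕ):ZMod (3*k)) by push_cast; ring,
      ZMod.natCast_eq_zero_iff] at hd
    have := Nat.le_of_dvd (by omega) hd; omega
  have h2 : (2 : ZMod (3*k)) ≠ 0 := by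
    intro hd
    rw [show (2:ZMod (3*k)) = ((2:ℕ):ZMod (3*k)) by push_cast; ring,
      ZMod.natCast_eq_zero_iff] at hd
    have := Nat.le_of_dvd (by omega) hd; omega
  have hK3 : ((k:ℕ) : ZMod (3*k)) + k + k = 0 := by
    rw [show ((k:ℕ):ZMod (3*k)) + k + k = ((3*k:ℕ):ZMod (3*k)) by push_cast; ring]
    exact ZMod.natCast_self _
  -- edge memberships
  have memout : ∀ i : ZMod (3*k),
      s(Sum.inl i, Sum.inl (i+1)) ∈ (GP (3*k) k).edgeSet := by
    intro i
    rw [SimpleGraph.mem_edgeSet]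
    simp only [GP, SimpleGraph.fromRel_adj]
    refine ⟨fun he => ?_, Or.inl trivial⟩
    exact one_ne_zero (by linear_combination - (Sum.inl.inj he : i = i + 1))
  have memsp : ∀ i : ZMod (3*k),
      s(Sum.inl i, Sum.inr i) ∈ (GP (3*k) k).edgeSet := by
    intro i
    rw [SimpleGraph.mem_edgeSet]
    simp [GP, SimpleGraph.fromRel_adj]
  have meminn : ∀ i : ZMod (3*k),
      s(Sum.inr i, Sum.inr (i+k)) ∈ (GP (3*k) k).edgeSet := by
    intro i
    rw [SimpleGraph.mem_edgeSet]
    simp only [GP, SimpleGraph.fromRel_adj]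
    refine ⟨fun he => ?_, Or.inl trivial⟩
    exact hK (by linear_combination - (Sum.inr.inj he : i = i + ↑k))
  -- spoke colours are determined, hence equal
  have spoke : ∀ i : ZMod (3*k),
      γ₁ s(Sum.inl i, Sum.inr i) = γ₂ s(Sum.inl i, Sum.inr i) := by
    intro i
    have hi : i - 1 + 1 = i := by ring
    have m1 : s(Sum.inl (i-1), Sum.inl i) ∈ (GP (3*k) k).edgeSet := by
      have := memout (i-1); rwa [hi] at this
    have hout1 : γ₁ s(Sum.inl (i-1), Sum.inl i) = γ₂ s(Sum.inl (i-1), Sum.inl i) := by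
      have := houter (i-1); rwa [hi] at this
    have hne12 : s((Sum.inl (i-1) : ZMod (3*k) ⊕ ZMod (3*k)), Sum.inl i) ≠ s(Sum.inl i, Sum.inl (i+1)) := by
      intro he
      rw [Sym2.eq_iff] at he
      rcases he with ⟨h, -⟩ | ⟨h, -⟩
      · exact one_ne_zero (by linear_combination - (Sum.inl.inj h : i - 1 = i))
      · exact h2 (by linear_combination - (Sum.inl.inj h : i - 1 = i + 1))
    have hnesp1 : s((Sum.inl i : ZMod (3*k) ⊕ ZMod (3*k)), Sum.inr i) ≠ s(Sum.inl (i-1), Sum.inl i) := by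
      intro he; rw [Sym2.eq_iff] at he
      rcases he with ⟨-, h⟩ | ⟨-, h⟩ <;> exact Sum.inr_ne_inl h
    have hnesp2 : s((Sum.inl i : ZMod (3*k) ⊕ ZMod (3*k)), Sum.inr i) ≠ s(Sum.inl i, Sum.inl (i+1)) := by
      intro he; rw [Sym2.eq_iff] at he
      rcases he with ⟨-, h⟩ | ⟨-, h⟩ <;> exact Sum.inr_ne_inl h
    refine fin3_unique (γ₁ s(Sum.inl (i-1), Sum.inl i)) (γ₁ s(Sum.inl i, Sum.inl (i+1)))
      _ _ ?_ ?_ ?_ ?_ ?_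
    · exact h₁ _ _ m1 (memout i) hne12 ⟨Sum.inl i, by simp, by simp⟩
    · exact h₁ _ _ (memsp i) m1 hnesp1 ⟨Sum.inl i, by simp, by simp⟩
    · exact h₁ _ _ (memsp i) (memout i) hnesp2 ⟨Sum.inl i, by simp, by simp⟩
    · rw [hout1]
      exact h₂ _ _ (memsp i) m1 hnesp1 ⟨Sum.inl i, by simp, by simp⟩
    · rw [houter i]
      exact h₂ _ _ (memsp i) (memout i) hnesp2 ⟨Sum.inl i, by simp, by simp⟩
  -- each inner edge's colour equals the spoke colour at the opposite triangle vertex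
  have inner_spoke : ∀ (γ : Sym2 (ZMod (3*k) ⊕ ZMod (3*k)) → Fin 3),
      IsProperEdgeColoring (GP (3*k) k) γ → ∀ i : ZMod (3*k),
      γ s(Sum.inr i, Sum.inr (i+k)) = γ s(Sum.inl (i+k+k), Sum.inr (i+k+k)) := by
    intro γ hγ i
    have hwrap : i + k + k + k = i := by linear_combination hK3
    have m3 : s(Sum.inr (i+k+k), Sum.inr i) ∈ (GP (3*k) k).edgeSet := by
      have := meminn (i+k+k); rwa [hwrap] at this
    have hneab : s((Sum.inr (i+k) : ZMod (3*k) ⊕ ZMod (3*k)), Sum.inr (i+k+k)) ≠ s(Sum.inr (i+k+k), Sum.inr i) := by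
      intro he; rw [Sym2.eq_iff] at he
      rcases he with ⟨h, -⟩ | ⟨h, -⟩
      · exact hK (by linear_combination - (Sum.inr.inj h : i + ↑k = i + ↑k + ↑k))
      · exact hK (by linear_combination (Sum.inr.inj h : i + ↑k = i))
    have hne0a : s((Sum.inr i : ZMod (3*k) ⊕ ZMod (3*k)), Sum.inr (i+k)) ≠ s(Sum.inr (i+k), Sum.inr (i+k+k)) := by
      intro he; rw [Sym2.eq_iff] at he
      rcases he with ⟨h, -⟩ | ⟨h, -⟩
      · exact hK (by linear_combination - (Sum.inr.inj h : i = i + ↑k))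
      · exact hK2 (by linear_combination - (Sum.inr.inj h : i = i + ↑k + ↑k))
    have hne0b : s((Sum.inr i : ZMod (3*k) ⊕ ZMod (3*k)), Sum.inr (i+k)) ≠ s(Sum.inr (i+k+k), Sum.inr i) := by
      intro he; rw [Sym2.eq_iff] at he
      rcases he with ⟨h, -⟩ | ⟨-, h⟩
      · exact hK2 (by linear_combination - (Sum.inr.inj h : i = i + ↑k + ↑k))
      · exact hK (by linear_combination - (Sum.inr.inj h : i + ↑k = i + ↑k + ↑k))
    have hnesa : s((Sum.inl (i+k+k) : ZMod (3*k) ⊕ ZMod (3*k)), Sum.inr (i+k+k)) ≠ s(Sum.inr (i+k), Sum.inr (i+k+k)) := by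
      intro he; rw [Sym2.eq_iff] at he
      rcases he with ⟨h, -⟩ | ⟨h, -⟩ <;> exact Sum.inl_ne_inr h
    have hnesb : s((Sum.inl (i+k+k) : ZMod (3*k) ⊕ ZMod (3*k)), Sum.inr (i+k+k)) ≠ s(Sum.inr (i+k+k), Sum.inr i) := by
      intro he; rw [Sym2.eq_iff] at he
      rcases he with ⟨h, -⟩ | ⟨h, -⟩ <;> exact Sum.inl_ne_inr h
    refine fin3_unique (γ s(Sum.inr (i+k), Sum.inr (i+k+k))) (γ s(Sum.inr (i+k+k), Sum.inr i))
      _ _ ?_ ?_ ?_ ?_ ?_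
    · exact hγ _ _ (meminn (i+k)) m3 hneab ⟨Sum.inr (i+k+k), by simp, by simp⟩
    · exact hγ _ _ (meminn i) (meminn (i+k)) hne0a ⟨Sum.inr (i+k), by simp, by simp⟩
    · exact hγ _ _ (meminn i) m3 hne0b ⟨Sum.inr i, by simp, by simp⟩
    · exact hγ _ _ (memsp (i+k+k)) (meminn (i+k)) hnesa ⟨Sum.inr (i+k+k), by simp, by simp⟩
    · exact hγ _ _ (memsp (i+k+k)) m3 hnesb ⟨Sum.inr (i+k+k), by simp, by simp⟩
  have inner : ∀ i : ZMod (3*k),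
      γ₁ s(Sum.inr i, Sum.inr (i+k)) = γ₂ s(Sum.inr i, Sum.inr (i+k)) := by
    intro i
    rw [inner_spoke γ₁ h₁ i, inner_spoke γ₂ h₂ i, spoke]
  -- now do all edges
  intro e he
  induction e using Sym2.ind with
  | _ a b =>
    rw [SimpleGraph.mem_edgeSet] at he
    simp only [GP, SimpleGraph.fromRel_adj] at he
    obtain ⟨-, hr⟩ := he
    rcases a with i | i
    all_goals rcases b with j | j
    · rcases hr with h | h
      · subst h; exact houter _
      · rw [Sym2.eq_swap]; subst h; exact houter _
    · rcases hr with h | h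
      · subst h; exact spoke _
      · exact absurd h not_false
    · rcases hr with h | h
      · exact absurd h not_false
      · rw [Sym2.eq_swap]; subst h; exact spoke _
    · rcases hr with h | h
      · subst h; exact inner _
      · rw [Sym2.eq_swap]; subst h; exact inner _
end

section
/- Define signed walk counts in the signed triangle T_±: the triangle on 3 vertices arranged cyclically where each clockwise directed edge has sign +1 and each counter-clockwise edge has sign -1; the sign of a directed walk is the product of the signs of its arcs. Let t_k^+(2) (resp. t_k^-(2)) denote the number of positive (resp. negative) directed walks of length k from a vertex x to the vertex y that is 2 clockwise steps from x. Then for all k ≥ 1, t_k^+(2) = (2^k - (-1)^k(1 + (-3)^{⌈k/2⌉}))/6 and t_k^-(2) = (2^k - (-1)^k(1 - (-3)^{⌈k/2⌉}))/6. -/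
/-- A directed walk of length `k` in the signed triangle `T_±` (vertex set `ℤ₃`, an arc
`i → i+1` of sign `+1` and an arc `i → i-1` of sign `-1` for each `i`), starting at the
fixed vertex `0`, is encoded by its sequence of steps: `true` is a clockwise step `+1`,
`false` a counter-clockwise step `-1`. `endVertex s` is the end vertex of the walk. -/
def endVertex {k : ℕ} (s : Fin k → Bool) : ZMod 3 :=
  ∑ i, (if s i then 1 else -1)

/-- The sign of a directed walk in `T_±`: the product of the signs of its arcs. -/
def walkSign {k : ℕ} (s : Fin k → Bool) : ℤ :=
  ∏ i, (if s i then 1 else (-1 : ℤ))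

/-- `tPos k ℓ` is the number of positive directed walks of length `k` in `T_±` from `0`
to the vertex `ℓ` clockwise steps away. -/
def tPos (k : ℕ) (ℓ : ZMod 3) : ℕ :=
  Fintype.card {s : Fin k → Bool // endVertex s = ℓ ∧ walkSign s = 1}

/-- `tNeg k ℓ` is the number of negative directed walks of length `k` in `T_±` from `0`
to the vertex `ℓ` clockwise steps away. -/
def tNeg (k : ℕ) (ℓ : ZMod 3) : ℕ :=
  Fintype.card {s : Fin k → Bool // endVertex s = ℓ ∧ walkSign s = -1}



lemma endVertex_cons_true {k : ℕ} (t : Fin k → Bool) :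
    endVertex (Fin.cons true t) = 1 + endVertex t := by
  simp [endVertex, Fin.sum_univ_succ]

lemma endVertex_cons_false {k : ℕ} (t : Fin k → Bool) :
    endVertex (Fin.cons false t) = -1 + endVertex t := by
  simp [endVertex, Fin.sum_univ_succ]

lemma walkSign_cons_true {k : ℕ} (t : Fin k → Bool) :
    walkSign (Fin.cons true t) = walkSign t := by
  simp [walkSign, Fin.prod_univ_succ]

lemma walkSign_cons_false {k : ℕ} (t : Fin k → Bool) :
    walkSign (Fin.cons false t) = -walkSign t := by
  simp [walkSign, Fin.prod_univ_succ]

lemma card_step (k : ℕ) (Q : (Fin (k+1) → Bool) → Prop) [DecidablePred Q] :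
    Fintype.card {s // Q s} =
      Fintype.card {t : Fin k → Bool // Q (Fin.cons true t)} +
      Fintype.card {t : Fin k → Bool // Q (Fin.cons false t)} := by
  simp only [Fintype.card_subtype, Finset.card_filter]
  rw [← Fintype.sum_equiv (Fin.consEquiv (fun _ => Bool))
      (fun p => if Q (Fin.cons p.1 p.2) then 1 else 0)
      (fun s => if Q s then 1 else 0) (fun p => rfl)]
  rw [Fintype.sum_prod_type]
  simp [Fintype.sum_bool]

lemma shift_iff (x ℓ : ZMod 3) : 1 + x = ℓ ↔ x = ℓ - 1 := by
  constructor <;> intro h <;> [rw [← h]; rw [h]] <;> ring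

lemma shift_iff' (x ℓ : ZMod 3) : -1 + x = ℓ ↔ x = ℓ + 1 := by
  constructor <;> intro h <;> [rw [← h]; rw [h]] <;> ring

lemma neg_sign_iff (w : ℤ) : -w = 1 ↔ w = -1 := by omega

lemma neg_sign_iff' (w : ℤ) : -w = -1 ↔ w = 1 := by omega

lemma tPos_rec (k : ℕ) (ℓ : ZMod 3) :
    tPos (k+1) ℓ = tPos k (ℓ-1) + tNeg k (ℓ+1) := by
  rw [tPos, card_step]
  congr 1
  · exact Fintype.card_congr (Equiv.subtypeEquivRight fun t => by
      rw [endVertex_cons_true, walkSign_cons_true, shift_iff])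
  · exact Fintype.card_congr (Equiv.subtypeEquivRight fun t => by
      rw [endVertex_cons_false, walkSign_cons_false, shift_iff', neg_sign_iff])

lemma tNeg_rec (k : ℕ) (ℓ : ZMod 3) :
    tNeg (k+1) ℓ = tNeg k (ℓ-1) + tPos k (ℓ+1) := by
  rw [tNeg, card_step]
  congr 1
  · exact Fintype.card_congr (Equiv.subtypeEquivRight fun t => by
      rw [endVertex_cons_true, walkSign_cons_true, shift_iff])
  · exact Fintype.card_congr (Equiv.subtypeEquivRight fun t => by
      rw [endVertex_cons_false, walkSign_cons_false, shift_iff', neg_sign_iff'])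

lemma tPos_rec2 (k : ℕ) (ℓ : ZMod 3) :
    tPos (k+2) ℓ = tPos k (ℓ-1-1) + tNeg k (ℓ-1+1) + (tNeg k (ℓ+1-1) + tPos k (ℓ+1+1)) := by
  rw [show k+2 = (k+1)+1 from rfl, tPos_rec, tPos_rec, tNeg_rec]

lemma tNeg_rec2 (k : ℕ) (ℓ : ZMod 3) :
    tNeg (k+2) ℓ = tNeg k (ℓ-1-1) + tPos k (ℓ-1+1) + (tPos k (ℓ+1-1) + tNeg k (ℓ+1+1)) := by
  rw [show k+2 = (k+1)+1 from rfl, tNeg_rec, tNeg_rec, tPos_rec]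

def Q (k : ℕ) : Prop :=
  (tPos k 0 : ℚ) = (2^k + 2*(-1)^k + (1+(-1)^k)*(-3)^((k+1)/2))/6 ∧
  (tPos k 1 : ℚ) = (2^k - (-1)^k - (-3)^((k+1)/2))/6 ∧
  (tPos k 2 : ℚ) = (2^k - (-1)^k*(1 + (-3:ℚ)^((k+1)/2)))/6 ∧
  (tNeg k 0 : ℚ) = (2^k + 2*(-1)^k - (1+(-1)^k)*(-3)^((k+1)/2))/6 ∧
  (tNeg k 1 : ℚ) = (2^k - (-1)^k + (-3)^((k+1)/2))/6 ∧
  (tNeg k 2 : ℚ) = (2^k - (-1)^k*(1 - (-3:ℚ)^((k+1)/2)))/6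

lemma base1 : Q 1 := by
  have h0 : tPos 1 0 = 0 := by decide
  have h1 : tPos 1 1 = 1 := by decide
  have h2 : tPos 1 2 = 0 := by decide
  have h3 : tNeg 1 0 = 0 := by decide
  have h4 : tNeg 1 1 = 0 := by decide
  have h5 : tNeg 1 2 = 1 := by decide
  refine ⟨?_, ?_, ?_, ?_, ?_, ?_⟩ <;> simp only [h0, h1, h2, h3, h4, h5] <;> norm_num

lemma base2 : Q 2 := by
  have h0 : tPos 2 0 = 0 := by decide
  have h1 : tPos 2 1 = 1 := by decide
  have h2 : tPos 2 2 = 1 := by decide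
  have h3 : tNeg 2 0 = 2 := by decide
  have h4 : tNeg 2 1 = 0 := by decide
  have h5 : tNeg 2 2 = 0 := by decide
  refine ⟨?_, ?_, ?_, ?_, ?_, ?_⟩ <;> simp only [h0, h1, h2, h3, h4, h5] <;> norm_num

lemma tPos_rec2' (k : ℕ) (ℓ : ZMod 3) :
    tPos (k+2) ℓ = tPos k (ℓ+1) + tNeg k ℓ + (tNeg k ℓ + tPos k (ℓ+2)) := by
  rw [tPos_rec2, show ∀ m : ZMod 3, m-1-1 = m+1 from by decide,
    show ∀ m : ZMod 3, m-1+1 = m from by decide,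
    show ∀ m : ZMod 3, m+1-1 = m from by decide,
    show ∀ m : ZMod 3, m+1+1 = m+2 from by decide]

lemma tNeg_rec2' (k : ℕ) (ℓ : ZMod 3) :
    tNeg (k+2) ℓ = tNeg k (ℓ+1) + tPos k ℓ + (tPos k ℓ + tNeg k (ℓ+2)) := by
  rw [tNeg_rec2, show ∀ m : ZMod 3, m-1-1 = m+1 from by decide,
    show ∀ m : ZMod 3, m-1+1 = m from by decide,
    show ∀ m : ZMod 3, m+1-1 = m from by decide,
    show ∀ m : ZMod 3, m+1+1 = m+2 from by decide]

lemma step (k : ℕ) (h : Q k) : Q (k+2) := by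
  obtain ⟨p0, p1, p2, n0, n1, n2⟩ := h
  have hc : (k + 2 + 1) / 2 = (k+1)/2 + 1 := by omega
  have g01 : (0:ZMod 3)+1 = 1 := by decide
  have g02 : (0:ZMod 3)+2 = 2 := by decide
  have g11 : (1:ZMod 3)+1 = 2 := by decide
  have g12 : (1:ZMod 3)+2 = 0 := by decide
  have g21 : (2:ZMod 3)+1 = 0 := by decide
  have g22 : (2:ZMod 3)+2 = 1 := by decide
  have hp0 := tPos_rec2' k 0
  have hp1 := tPos_rec2' k 1
  have hp2 := tPos_rec2' k 2
  have hn0 := tNeg_rec2' k 0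
  have hn1 := tNeg_rec2' k 1
  have hn2 := tNeg_rec2' k 2
  simp only [g01, g02, g11, g12, g21, g22] at hp0 hp1 hp2 hn0 hn1 hn2
  refine ⟨?_, ?_, ?_, ?_, ?_, ?_⟩
  · rw [hp0]; push_cast; simp only [p0, p1, p2, n0, n1, n2]; rw [hc]; ring
  · rw [hp1]; push_cast; simp only [p0, p1, p2, n0, n1, n2]; rw [hc]; ring
  · rw [hp2]; push_cast; simp only [p0, p1, p2, n0, n1, n2]; rw [hc]; ring
  · rw [hn0]; push_cast; simp only [p0, p1, p2, n0, n1, n2]; rw [hc]; ring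
  · rw [hn1]; push_cast; simp only [p0, p1, p2, n0, n1, n2]; rw [hc]; ring
  · rw [hn2]; push_cast; simp only [p0, p1, p2, n0, n1, n2]; rw [hc]; ring

lemma Qall : ∀ m : ℕ, Q (m+1) ∧ Q (m+2) := by
  intro m
  induction m with
  | zero => exact ⟨base1, base2⟩
  | succ n ih => exact ⟨ih.2, step (n+1) ih.1⟩

theorem signed_walk_counts_closed_form (k : ℕ) (hk : 1 ≤ k) :
    (tPos k 2 : ℚ) = (2 ^ k - (-1) ^ k * (1 + (-3 : ℚ) ^ ((k + 1) / 2))) / 6 ∧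
    (tNeg k 2 : ℚ) = (2 ^ k - (-1) ^ k * (1 - (-3 : ℚ) ^ ((k + 1) / 2))) / 6 := by
  obtain ⟨m, rfl⟩ : ∃ m, k = m + 1 := ⟨k - 1, by omega⟩
  obtain ⟨_, _, h2, _, _, h5⟩ := (Qall m).1
  exact ⟨h2, h5⟩
end

section
/- Every generalised Petersen graph GP(3k,k) with k ≥ 2 has a proper 3-edge-colouring; equivalently, its edge set can be partitioned into 3 perfect matchings. -/
namespace GPCol

/-- defect -/
def e0 (k t : ℕ) : ZMod 3 := if t = 0 ∧ k % 2 = 0 then 1 else 0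

/-- spoke colour -/
def Cn (k m : ℕ) : ZMod 3 := ((m / k : ℕ) : ZMod 3) + e0 k (m % k)

/-- outer colour (edge u_m u_{m+1}) -/
def Fn (k m : ℕ) : ZMod 3 := ((m / k : ℕ) : ZMod 3) + (if (m % k) % 2 = 0 then 2 else 1)

/-- inner colour (edge v_m v_{m+k}) -/
def Gn (k m : ℕ) : ZMod 3 := ((m / k : ℕ) : ZMod 3) + 2 + e0 k (m % k)

lemma key {x c d : ZMod 3} (h : c ≠ d) : x + c ≠ x + d := fun he => h (add_left_cancel he)

lemma e0_cases (k t : ℕ) : e0 k t = 0 ∨ e0 k t = 1 := by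
  unfold e0; split <;> simp

lemma e0_ne (k : ℕ) {t : ℕ} (h : t ≠ 0) : e0 k t = 0 := by
  unfold e0; rw [if_neg (by tauto)]

lemma e0_even {k : ℕ} (h : k % 2 = 0) : e0 k 0 = 1 := by
  unfold e0; rw [if_pos ⟨rfl, h⟩]

lemma e0_odd {k : ℕ} (h : ¬ k % 2 = 0) : e0 k 0 = 0 := by
  unfold e0; rw [if_neg (by tauto)]

lemma div_eval {k : ℕ} (hk : 0 < k) (a : ℕ) {t : ℕ} (ht : t < k) : (a * k + t) / k = a := by
  rw [add_comm, Nat.add_mul_div_right _ _ hk, Nat.div_eq_of_lt ht, zero_add]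

lemma mod_eval {k : ℕ} (a : ℕ) {t : ℕ} (ht : t < k) : (a * k + t) % k = t := by
  rw [add_comm, Nat.add_mul_mod_self_right, Nat.mod_eq_of_lt ht]

lemma Cn_eval {k : ℕ} (hk : 0 < k) (a : ℕ) {t : ℕ} (ht : t < k) :
    Cn k (a * k + t) = ((a : ℕ) : ZMod 3) + e0 k t := by
  unfold Cn; rw [div_eval hk a ht, mod_eval a ht]

lemma Fn_eval {k : ℕ} (hk : 0 < k) (a : ℕ) {t : ℕ} (ht : t < k) :
    Fn k (a * k + t) = ((a : ℕ) : ZMod 3) + (if t % 2 = 0 then 2 else 1) := by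
  unfold Fn; rw [div_eval hk a ht, mod_eval a ht]

lemma Gn_eval {k : ℕ} (hk : 0 < k) (a : ℕ) {t : ℕ} (ht : t < k) :
    Gn k (a * k + t) = ((a : ℕ) : ZMod 3) + 2 + e0 k t := by
  unfold Gn; rw [div_eval hk a ht, mod_eval a ht]

lemma decomp {k m : ℕ} (hk : 0 < k) (hm : m < 3 * k) :
    ∃ a t, a < 3 ∧ t < k ∧ m = a * k + t :=
  ⟨m / k, m % k, Nat.div_lt_of_lt_mul (by omega), Nat.mod_lt _ hk,
    (Nat.div_add_mod' m k).symm⟩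

lemma NA {k : ℕ} (hk : 2 ≤ k) {m : ℕ} (hm : m < 3 * k) :
    Fn k m ≠ Fn k ((m + 1) % (3 * k)) ∧ Fn k m ≠ Cn k ((m + 1) % (3 * k)) := by
  have hk0 : 0 < k := by omega
  obtain ⟨a, t, ha, ht, rfl⟩ := decomp hk0 hm
  have hak : a * k ≤ 2 * k := Nat.mul_le_mul_right _ (by omega)
  by_cases hb : t + 1 < k
  · have h1 : (a * k + t + 1) % (3 * k) = a * k + (t + 1) := by
      rw [Nat.mod_eq_of_lt (by omega), add_assoc]
    rw [h1, Fn_eval hk0 a ht, Fn_eval hk0 a hb, Cn_eval hk0 a hb, e0_ne k (by omega)]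
    by_cases h2 : t % 2 = 0
    · rw [if_pos h2, if_neg (by omega)]
      exact ⟨key (by decide), key (by decide)⟩
    · rw [if_neg h2, if_pos (by omega)]
      exact ⟨key (by decide), key (by decide)⟩
  · -- t + 1 = k : block boundary
    have htk : t + 1 = k := by omega
    by_cases ha2 : a < 2
    · have hak1 : a * k ≤ 1 * k := Nat.mul_le_mul_right _ (by omega)
      have h1 : (a * k + t + 1) % (3 * k) = (a + 1) * k + 0 := by
        rw [Nat.mod_eq_of_lt (by omega), add_mul, one_mul, add_zero, add_assoc, htk]
      rw [h1, Fn_eval hk0 a ht, Fn_eval hk0 (a + 1) hk0, Cn_eval hk0 (a + 1) hk0,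
        Nat.cast_add, Nat.cast_one]
      by_cases hke : k % 2 = 0
      · rw [e0_even hke, if_neg (by omega), if_pos (by omega)]
        simp only [add_assoc]
        exact ⟨key (by decide), key (by decide)⟩
      · rw [e0_odd hke, if_pos (by omega), if_pos (by omega)]
        simp only [add_assoc]
        exact ⟨key (by decide), key (by decide)⟩
    · have ha3 : a = 2 := by omega
      subst ha3
      have h1 : (2 * k + t + 1) % (3 * k) = 0 * k + 0 := by
        rw [show 2 * k + t + 1 = 3 * k by omega, Nat.mod_self, zero_mul]
      rw [h1, Fn_eval hk0 2 ht, Fn_eval hk0 0 hk0, Cn_eval hk0 0 hk0]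
      by_cases hke : k % 2 = 0
      · rw [e0_even hke, if_neg (by omega), if_pos (by omega)]
        exact ⟨by decide, by decide⟩
      · rw [e0_odd hke, if_pos (by omega), if_pos (by omega)]
        exact ⟨by decide, by decide⟩

lemma NA3 {k : ℕ} (hk : 2 ≤ k) {m : ℕ} (hm : m < 3 * k) : Fn k m ≠ Cn k m := by
  have hk0 : 0 < k := by omega
  obtain ⟨a, t, ha, ht, rfl⟩ := decomp hk0 hm
  rw [Fn_eval hk0 a ht, Cn_eval hk0 a ht]
  by_cases h2 : t % 2 = 0
  · rw [if_pos h2]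
    rcases e0_cases k t with h | h <;> rw [h]
    · exact key (by decide)
    · exact key (by decide)
  · rw [if_neg h2, e0_ne k (by omega)]
    exact key (by decide)

lemma NB {k : ℕ} (hk : 2 ≤ k) {m : ℕ} (hm : m < 3 * k) :
    Gn k m ≠ Gn k ((m + k) % (3 * k)) ∧ Gn k m ≠ Cn k ((m + k) % (3 * k)) := by
  have hk0 : 0 < k := by omega
  obtain ⟨a, t, ha, ht, rfl⟩ := decomp hk0 hm
  by_cases ha2 : a < 2
  · have hak : a * k ≤ 1 * k := Nat.mul_le_mul_right _ (by omega)
    have h1 : (a * k + t + k) % (3 * k) = (a + 1) * k + t := by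
      rw [Nat.mod_eq_of_lt (by omega), add_mul, one_mul]
      omega
    rw [h1, Gn_eval hk0 a ht, Gn_eval hk0 (a + 1) ht, Cn_eval hk0 (a + 1) ht,
      Nat.cast_add, Nat.cast_one]
    rcases e0_cases k t with h | h <;> rw [h] <;> simp only [add_assoc] <;>
      exact ⟨key (by decide), key (by decide)⟩
  · have ha3 : a = 2 := by omega
    subst ha3
    have h1 : (2 * k + t + k) % (3 * k) = 0 * k + t := by
      rw [show 2 * k + t + k = 3 * k + t by omega, Nat.add_mod_left,
        Nat.mod_eq_of_lt (by omega), zero_mul, zero_add]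
    rw [h1, Gn_eval hk0 2 ht, Gn_eval hk0 0 ht, Cn_eval hk0 0 ht]
    rcases e0_cases k t with h | h <;> rw [h] <;> exact ⟨by decide, by decide⟩

lemma NB3 {k : ℕ} (hk : 2 ≤ k) {m : ℕ} (hm : m < 3 * k) : Gn k m ≠ Cn k m := by
  have hk0 : 0 < k := by omega
  obtain ⟨a, t, ha, ht, rfl⟩ := decomp hk0 hm
  rw [Gn_eval hk0 a ht, Cn_eval hk0 a ht]
  rcases e0_cases k t with h | h <;> rw [h] <;> simp only [add_assoc] <;>
    exact key (by decide)

section ZModLemmas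

variable {k : ℕ} (hk : 2 ≤ k)

lemma cast_val {n : ℕ} [NeZero n] (i : ZMod n) : ((i.val : ℕ) : ZMod n) = i :=
  (ZMod.natCast_val i).trans (ZMod.cast_id _ _)

lemma val_add_one {n : ℕ} [NeZero n] (i : ZMod n) : (i + 1).val = (i.val + 1) % n := by
  conv_lhs => rw [← cast_val i, ← Nat.cast_one, ← Nat.cast_add]
  rw [ZMod.val_natCast]

lemma val_add_k {n : ℕ} [NeZero n] (m : ℕ) (i : ZMod n) :
    (i + (m : ZMod n)).val = (i.val + m) % n := by
  conv_lhs => rw [← cast_val i, ← Nat.cast_add]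
  rw [ZMod.val_natCast]

include hk

lemma nz : NeZero (3 * k) := ⟨by omega⟩

lemma ZA1 (i : ZMod (3 * k)) : Fn k i.val ≠ Fn k (i + 1).val := by
  haveI := nz hk
  rw [val_add_one]
  exact (NA hk (ZMod.val_lt i)).1

lemma ZA2 (i : ZMod (3 * k)) : Fn k i.val ≠ Cn k (i + 1).val := by
  haveI := nz hk
  rw [val_add_one]
  exact (NA hk (ZMod.val_lt i)).2

lemma ZA3 (i : ZMod (3 * k)) : Fn k i.val ≠ Cn k i.val := by
  haveI := nz hk
  exact NA3 hk (ZMod.val_lt i)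

lemma ZB1 (i : ZMod (3 * k)) : Gn k i.val ≠ Gn k (i + (k : ZMod (3 * k))).val := by
  haveI := nz hk
  rw [val_add_k]
  exact (NB hk (ZMod.val_lt i)).1

lemma ZB2 (i : ZMod (3 * k)) : Gn k i.val ≠ Cn k (i + (k : ZMod (3 * k))).val := by
  haveI := nz hk
  rw [val_add_k]
  exact (NB hk (ZMod.val_lt i)).2

lemma ZB3 (i : ZMod (3 * k)) : Gn k i.val ≠ Cn k i.val := by
  haveI := nz hk
  exact NB3 hk (ZMod.val_lt i)

lemma two_ne_zero' : ((2 : ℕ) : ZMod (3 * k)) ≠ 0 := by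
  rw [Ne, ZMod.natCast_eq_zero_iff]
  intro h
  have := Nat.le_of_dvd (by omega) h
  omega

lemma twok_ne_zero' : ((k + k : ℕ) : ZMod (3 * k)) ≠ 0 := by
  rw [Ne, ZMod.natCast_eq_zero_iff]
  intro h
  have := Nat.le_of_dvd (by omega) h
  omega

lemma add_two_ne (i : ZMod (3 * k)) : i ≠ i + 1 + 1 := by
  rw [add_assoc]
  intro h
  have h2 := left_eq_add.mp h
  have h3 : ((2 : ℕ) : ZMod (3 * k)) = 1 + 1 := by norm_num
  exact two_ne_zero' hk (h3.trans h2)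

lemma add_twok_ne (i : ZMod (3 * k)) : i ≠ i + (k : ZMod (3 * k)) + (k : ZMod (3 * k)) := by
  rw [add_assoc]
  intro h
  have h2 := left_eq_add.mp h
  exact twok_ne_zero' hk ((Nat.cast_add k k).trans h2)

end ZModLemmas

/-- the colouring as a two-argument function -/
def col (k : ℕ) : ZMod (3 * k) ⊕ ZMod (3 * k) → ZMod (3 * k) ⊕ ZMod (3 * k) → ZMod 3
  | Sum.inl i, Sum.inl j =>
      if j = i + 1 then Fn k i.val else if i = j + 1 then Fn k j.val else 0
  | Sum.inl i, Sum.inr _ => Cn k i.val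
  | Sum.inr _, Sum.inl j => Cn k j.val
  | Sum.inr i, Sum.inr j =>
      if j = i + (k : ZMod (3 * k)) then Gn k i.val
      else if i = j + (k : ZMod (3 * k)) then Gn k j.val else 0

lemma col_symm {k : ℕ} (hk : 2 ≤ k) (a b : ZMod (3 * k) ⊕ ZMod (3 * k)) :
    col k a b = col k b a := by
  rcases a with i | i <;> rcases b with j | j <;> simp only [col]
  · by_cases h1 : j = i + 1
    · subst h1
      simp only [if_neg (add_two_ne hk i), if_pos rfl]
    · by_cases h2 : i = j + 1
      · subst h2
        simp only [if_neg (add_two_ne hk j), if_pos rfl]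
      · simp only [if_neg h1, if_neg h2]
  · by_cases h1 : j = i + (k : ZMod (3 * k))
    · subst h1
      simp only [if_neg (add_twok_ne hk i), if_pos rfl]
    · by_cases h2 : i = j + (k : ZMod (3 * k))
      · subst h2
        simp only [if_neg (add_twok_ne hk j), if_pos rfl]
      · simp only [if_neg h1, if_neg h2]

section Eval

variable {k : ℕ} (hk : 2 ≤ k)

lemma col_outer (i : ZMod (3 * k)) :
    col k (Sum.inl i) (Sum.inl (i + 1)) = Fn k i.val := by
  simp [col]

lemma col_spoke (i j : ZMod (3 * k)) : col k (Sum.inl i) (Sum.inr j) = Cn k i.val := rfl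

lemma col_spoke' (i j : ZMod (3 * k)) : col k (Sum.inr i) (Sum.inl j) = Cn k j.val := rfl

lemma col_inner (i : ZMod (3 * k)) :
    col k (Sum.inr i) (Sum.inr (i + (k : ZMod (3 * k)))) = Gn k i.val := by
  simp [col]

include hk

lemma col_outer' (i : ZMod (3 * k)) :
    col k (Sum.inl i) (Sum.inl (i - 1)) = Fn k (i - 1).val := by
  have h1 : ¬ (i - 1 = i + 1) := fun h =>
    add_two_ne hk (i - 1) (by rw [sub_add_cancel]; exact h)
  have h2 : i = i - 1 + 1 := (sub_add_cancel i 1).symm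
  simp only [col]; rw [if_neg h1, if_pos h2]

lemma col_inner' (i : ZMod (3 * k)) :
    col k (Sum.inr i) (Sum.inr (i - (k : ZMod (3 * k)))) = Gn k (i - (k : ZMod (3 * k))).val := by
  have h1 : ¬ (i - (k : ZMod (3 * k)) = i + (k : ZMod (3 * k))) := fun h =>
    add_twok_ne hk (i - (k : ZMod (3 * k))) (by rw [sub_add_cancel]; exact h)
  have h2 : i = i - (k : ZMod (3 * k)) + (k : ZMod (3 * k)) := (sub_add_cancel i _).symm
  simp only [col]; rw [if_neg h1, if_pos h2]

end Eval

lemma exists_other {V : Type*} (G : SimpleGraph V) (e : Sym2 V) (he : e ∈ G.edgeSet)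
    (v : V) (hv : v ∈ e) : ∃ w, G.Adj v w ∧ e = s(v, w) := by
  induction e using Sym2.ind with
  | _ x y =>
    rw [SimpleGraph.mem_edgeSet] at he
    rcases Sym2.mem_iff.mp hv with rfl | rfl
    · exact ⟨y, he, rfl⟩
    · exact ⟨x, he.symm, Sym2.eq_swap⟩

lemma adj_inl {k : ℕ} {i : ZMod (3 * k)} {w : ZMod (3 * k) ⊕ ZMod (3 * k)}
    (h : (GP (3 * k) k).Adj (Sum.inl i) w) :
    w = Sum.inl (i + 1) ∨ w = Sum.inl (i - 1) ∨ w = Sum.inr i := by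
  rcases w with j | j <;>
    rw [GP, SimpleGraph.fromRel_adj] at h
  · rcases h.2 with h' | h'
    · exact Or.inl (congrArg Sum.inl (show j = i + 1 from h'))
    · exact Or.inr (Or.inl (congrArg Sum.inl
        (eq_sub_of_add_eq (show i = j + 1 from h').symm)))
  · rcases h.2 with h' | h'
    · exact Or.inr (Or.inr (congrArg Sum.inr (show j = i from h')))
    · exact (show False from h').elim

lemma adj_inr {k : ℕ} {i : ZMod (3 * k)} {w : ZMod (3 * k) ⊕ ZMod (3 * k)}
    (h : (GP (3 * k) k).Adj (Sum.inr i) w) :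
    w = Sum.inl i ∨ w = Sum.inr (i + (k : ZMod (3 * k))) ∨
      w = Sum.inr (i - (k : ZMod (3 * k))) := by
  rcases w with j | j <;>
    rw [GP, SimpleGraph.fromRel_adj] at h
  · rcases h.2 with h' | h'
    · exact (show False from h').elim
    · exact Or.inl (congrArg Sum.inl (show i = j from h').symm)
  · rcases h.2 with h' | h'
    · exact Or.inr (Or.inl (congrArg Sum.inr (show j = i + (k : ZMod (3 * k)) from h')))
    · exact Or.inr (Or.inr (congrArg Sum.inr
        (eq_sub_of_add_eq (show i = j + (k : ZMod (3 * k)) from h').symm)))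

end GPCol

theorem GP_three_edge_colourable (k : ℕ) (hk : 2 ≤ k) :
    ∃ γ : Sym2 (ZMod (3*k) ⊕ ZMod (3*k)) → Fin 3,
      IsProperEdgeColoring (GP (3*k) k) γ := by
  classical
  refine ⟨Sym2.lift ⟨GPCol.col k, fun a b => GPCol.col_symm hk a b⟩, ?_⟩
  rintro e f he hf hne ⟨v, hve, hvf⟩
  obtain ⟨w1, ha1, rfl⟩ := GPCol.exists_other _ e he v hve
  obtain ⟨w2, ha2, rfl⟩ := GPCol.exists_other _ f hf v hvf
  have hw : w1 ≠ w2 := fun h => hne (by rw [h])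
  simp only [Sym2.lift_mk]
  have hZA1 : ∀ j : ZMod (3 * k), GPCol.Fn k (j - 1).val ≠ GPCol.Fn k j.val := by
    intro j
    have := GPCol.ZA1 hk (j - 1)
    rwa [sub_add_cancel] at this
  have hZA2 : ∀ j : ZMod (3 * k), GPCol.Fn k (j - 1).val ≠ GPCol.Cn k j.val := by
    intro j
    have := GPCol.ZA2 hk (j - 1)
    rwa [sub_add_cancel] at this
  have hZB1 : ∀ j : ZMod (3 * k),
      GPCol.Gn k (j - (k : ZMod (3 * k))).val ≠ GPCol.Gn k j.val := by
    intro j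
    have := GPCol.ZB1 hk (j - (k : ZMod (3 * k)))
    rwa [sub_add_cancel] at this
  have hZB2 : ∀ j : ZMod (3 * k),
      GPCol.Gn k (j - (k : ZMod (3 * k))).val ≠ GPCol.Cn k j.val := by
    intro j
    have := GPCol.ZB2 hk (j - (k : ZMod (3 * k)))
    rwa [sub_add_cancel] at this
  rcases v with i | i
  · rcases GPCol.adj_inl ha1 with rfl | rfl | rfl <;>
      rcases GPCol.adj_inl ha2 with rfl | rfl | rfl
    · exact absurd rfl hw
    · rw [GPCol.col_outer, GPCol.col_outer' hk]
      exact (hZA1 i).symm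
    · rw [GPCol.col_outer, GPCol.col_spoke]
      exact GPCol.ZA3 hk i
    · rw [GPCol.col_outer, GPCol.col_outer' hk]
      exact hZA1 i
    · exact absurd rfl hw
    · rw [GPCol.col_outer' hk, GPCol.col_spoke]
      exact hZA2 i
    · rw [GPCol.col_outer, GPCol.col_spoke]
      exact (GPCol.ZA3 hk i).symm
    · rw [GPCol.col_outer' hk, GPCol.col_spoke]
      exact (hZA2 i).symm
    · exact absurd rfl hw
  · rcases GPCol.adj_inr ha1 with rfl | rfl | rfl <;>
      rcases GPCol.adj_inr ha2 with rfl | rfl | rfl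
    · exact absurd rfl hw
    · rw [GPCol.col_spoke', GPCol.col_inner]
      exact (GPCol.ZB3 hk i).symm
    · rw [GPCol.col_spoke', GPCol.col_inner' hk]
      exact (hZB2 i).symm
    · rw [GPCol.col_spoke', GPCol.col_inner]
      exact GPCol.ZB3 hk i
    · exact absurd rfl hw
    · rw [GPCol.col_inner, GPCol.col_inner' hk]
      exact (hZB1 i).symm
    · rw [GPCol.col_spoke', GPCol.col_inner' hk]
      exact hZB2 i
    · rw [GPCol.col_inner, GPCol.col_inner' hk]
      exact hZB1 i
    · exact absurd rfl hw
end
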